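/- Let M be an MSC over P and Σ, let p, q ∈ P, let π, π' ∈ Π_{p,q}, and let f ∈ E_q such that last_π(f) ≠ ⊥ and last_{π'}(f) ≠ ⊥. Then π ≼_f π' if and only if f_{π, →*π'}(f) ≤ f (in the order on E ∪ {⊥,⊤}), where →*π' denotes the path expression consisting of the letter →* followed by π'. -/

import Mathlib

namespace Gossip

/-- Events extended with bottom and top elements. -/
inductive ExtEv (E : Type) : Type where
  | bot : ExtEv E
  | evt (e : E) : ExtEv E
  | top : ExtEv E

/-- A message sequence chart (MSC) over processes `P`, alphabet `A`,
with (finite, nonempty) set of events `E`. -/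
structure MSC (P A E : Type) : Type where
  fintypeE : Fintype E
  nonemptyE : Nonempty E
  loc : E → P
  lab : E → A
  /-- process successor relation `→` -/
  next : E → E → Prop
  /-- message relation `◁` -/
  msg : E → E → Prop
  next_loc : ∀ {e f : E}, next e f → loc e = loc f
  next_irrefl : ∀ e : E, ¬ next e e
  next_right_unique : ∀ {e f f' : E}, next e f → next e f' → f = f'
  next_left_unique : ∀ {e e' f : E}, next e f → next e' f → e = e'
  next_total : ∀ e f : E, loc e = loc f →
      Relation.ReflTransGen next e f ∨ Relation.ReflTransGen next f e
  msg_loc : ∀ {e f : E}, msg e f → loc e ≠ loc f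
  /-- every event belongs to at most one pair of `◁` -/
  msg_unique : ∀ {e f e' f' : E}, msg e f → msg e' f' →
      (e = e' ∨ e = f' ∨ f = e' ∨ f = f') → e = e' ∧ f = f'
  fifo : ∀ {e f e' f' : E}, msg e f → msg e' f' → loc e = loc e' → loc f = loc f' →
      (Relation.ReflTransGen next e e' ↔ Relation.ReflTransGen next f f')
  /-- `≤ = (→ ∪ ◁)*` is a partial order -/
  causal_antisymm : ∀ {e f : E},
      Relation.ReflTransGen (fun x y => next x y ∨ msg x y) e f →
      Relation.ReflTransGen (fun x y => next x y ∨ msg x y) f e → e = f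

namespace MSC

variable {P A E B : Type}

/-- the causal order `≤ = (→ ∪ ◁)*` -/
def le (M : MSC P A E) : E → E → Prop :=
  Relation.ReflTransGen (fun x y => M.next x y ∨ M.msg x y)

/-- the strict causal order `<` -/
def lt (M : MSC P A E) (e f : E) : Prop := M.le e f ∧ e ≠ f

/-- `→*` -/
def nextStar (M : MSC P A E) : E → E → Prop := Relation.ReflTransGen M.next

/-- the causal order extended to `E ∪ {⊥,⊤}` with `⊥ < e < ⊤` -/
def extLe (M : MSC P A E) : ExtEv E → ExtEv E → Prop
  | .bot, _ => True
  | _, .top => True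
  | .evt e, .evt f => M.le e f
  | _, _ => False

def extLt (M : MSC P A E) (x y : ExtEv E) : Prop := M.extLe x y ∧ x ≠ y

/-- replace the labelling of an MSC (e.g. to pair it with an extra labelling) -/
def relabel (M : MSC P A E) (μ : E → B) : MSC P B E where
  fintypeE := M.fintypeE
  nonemptyE := M.nonemptyE
  loc := M.loc
  lab := μ
  next := M.next
  msg := M.msg
  next_loc := M.next_loc
  next_irrefl := M.next_irrefl
  next_right_unique := M.next_right_unique
  next_left_unique := M.next_left_unique
  next_total := M.next_total
  msg_loc := M.msg_loc
  msg_unique := M.msg_unique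
  fifo := M.fifo
  causal_antisymm := M.causal_antisymm

end MSC

/-- letters of path expressions: `→`, `→*`, `p▷q`, `⟨a⟩` -/
inductive PathLetter (P A : Type) : Type where
  | next : PathLetter P A
  | nextStar : PathLetter P A
  | msg (p q : P) : PathLetter P A
  | lab (a : A) : PathLetter P A

/-- path expressions: finite words over `Γ` -/
abbrev PathExpr (P A : Type) := List (PathLetter P A)

variable {P A E : Type}

def letterSem (M : MSC P A E) : PathLetter P A → E → E → Prop
  | .next => M.next
  | .nextStar => M.nextStar
  | .msg p q => fun e f => M.loc e = p ∧ M.loc f = q ∧ M.msg e f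
  | .lab a => fun e f => e = f ∧ M.lab e = a

/-- `⟦π⟧` -/
def pathSem (M : MSC P A E) : PathExpr P A → E → E → Prop
  | [] => fun e f => e = f
  | l :: π => fun e g => ∃ f, letterSem M l e f ∧ pathSem M π f g

def letterComp : PathLetter P A → P → P → Prop
  | .msg p q => fun x y => x = p ∧ y = q
  | _ => fun x y => x = y

/-- `Comp(π)`; `π ∈ Π_{p,q}` iff `pcomp π p q` -/
def pcomp : PathExpr P A → P → P → Prop
  | [] => fun x y => x = y
  | l :: π => fun x z => ∃ y, letterComp l x y ∧ pcomp π y z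

/-- `IsLast M π e x` holds iff `x = last_π(e)` (with `x = ⊥` iff no `π`-path into `e`). -/
def IsLast (M : MSC P A E) (π : PathExpr P A) (e : E) : ExtEv E → Prop
  | .bot => ∀ f, ¬ pathSem M π f e
  | .evt g => pathSem M π g e ∧ ∀ f, pathSem M π f e → M.le f g
  | .top => False

/-- `IsFirst M π e x` holds iff `x = first_π(e)` (with `x = ⊤` iff no `π`-path out of `e`). -/
def IsFirst (M : MSC P A E) (π : PathExpr P A) (e : E) : ExtEv E → Prop
  | .top => ∀ f, ¬ pathSem M π e f
  | .evt g => pathSem M π e g ∧ ∀ f, pathSem M π e f → M.le g f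
  | .bot => False

/-- `IsFa M π π' e x` holds iff `x = f_{π,π'}(e) = first_{π'}(last_π(e))`, with
`first_{π'}(⊥) := ⊥`. -/
def IsFa (M : MSC P A E) (π π' : PathExpr P A) (e : E) (x : ExtEv E) : Prop :=
  (IsLast M π e ExtEv.bot ∧ x = ExtEv.bot) ∨
    ∃ g, IsLast M π e (ExtEv.evt g) ∧ IsFirst M π' g x

/-- `IsLastProc M p e x` holds iff `x = last_p(e)`, the maximal event of process `p`
strictly below `e` (`⊥` if none). -/
def IsLastProc (M : MSC P A E) (p : P) (e : E) : ExtEv E → Prop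
  | .bot => ∀ f, M.loc f = p → ¬ M.lt f e
  | .evt g => M.loc g = p ∧ M.lt g e ∧ ∀ f, M.loc f = p → M.lt f e → M.le f g
  | .top => False

/-- `π ≼_e π'`, i.e. `last_π(e) ≤ last_{π'}(e)` -/
def ple (M : MSC P A E) (π π' : PathExpr P A) (e : E) : Prop :=
  ∃ x y, IsLast M π e x ∧ IsLast M π' e y ∧ M.extLe x y

def gossipSuffix : P → List P → PathExpr P A
  | _, [] => []
  | p, q :: w => PathLetter.msg p q :: PathLetter.nextStar :: gossipSuffix q w

/-- `π_w` for `w = p :: rest` -/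
def gossipExpr (p : P) (w : List P) : PathExpr P A :=
  match w with
  | [] => [PathLetter.next, PathLetter.nextStar]
  | _ :: _ => PathLetter.nextStar :: gossipSuffix p w

/-- `π ∈ Π^gossip` -/
def IsGossip (π : PathExpr P A) : Prop :=
  ∃ (p : P) (w : List P), (p :: w).Nodup ∧ π = gossipExpr p w

/-- actions of a CFM transition -/
inductive CAct (P A Msg : Type) : Type where
  | internal (a : A) : CAct P A Msg
  | send (a : A) (m : Msg) (q : P) : CAct P A Msg
  | recv (a : A) (m : Msg) (q : P) : CAct P A Msg

def CAct.labelOf {P A Msg : Type} : CAct P A Msg → A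
  | .internal a => a
  | .send a _ _ => a
  | .recv a _ _ => a

/-- a communicating finite-state machine over `P` and `A` -/
structure CFM (P A : Type) : Type 1 where
  Msg : Type
  msgFin : Fintype Msg
  S : Type
  sFin : Fintype S
  ι : P → S
  Δ : P → Set (S × CAct P A Msg × S)
  Acc : Set (P → S)
  wf_send : ∀ p s a m q s', (s, CAct.send a m q, s') ∈ Δ p → q ≠ p
  wf_recv : ∀ p s a m q s', (s, CAct.recv a m q, s') ∈ Δ p → q ≠ p

namespace CFM

variable {P A E : Type}

/-- `ρ` is a run of the CFM `C` on the MSC `M` -/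
def IsRun (C : CFM P A) (M : MSC P A E) (ρ : E → C.S × CAct P A C.Msg × C.S) : Prop :=
  (∀ e, ρ e ∈ C.Δ (M.loc e)) ∧
  (∀ e, ((ρ e).2.1).labelOf = M.lab e) ∧
  (∀ e, (¬ ∃ f, M.next f e) → (ρ e).1 = C.ι (M.loc e)) ∧
  (∀ e f, M.next e f → (ρ e).2.2 = (ρ f).1) ∧
  (∀ e, (¬ ∃ f, M.msg e f) → (¬ ∃ f, M.msg f e) → ∃ a, (ρ e).2.1 = CAct.internal a) ∧
  (∀ e f, M.msg e f → ∃ m, (ρ e).2.1 = CAct.send (M.lab e) m (M.loc f) ∧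
      (ρ f).2.1 = CAct.recv (M.lab f) m (M.loc e))

/-- the run `ρ` is accepting -/
def IsAccepting (C : CFM P A) (M : MSC P A E)
    (ρ : E → C.S × CAct P A C.Msg × C.S) : Prop :=
  ∃ s : P → C.S, s ∈ C.Acc ∧ ∀ p,
    ((∃ e, M.loc e = p) → ∃ e, M.loc e = p ∧ (¬ ∃ f, M.next e f) ∧ s p = (ρ e).2.2) ∧
    ((¬ ∃ e, M.loc e = p) → s p = C.ι p)

/-- `M ∈ L(C)` -/
def Accepts (C : CFM P A) (M : MSC P A E) : Prop :=
  ∃ ρ, C.IsRun M ρ ∧ C.IsAccepting M ρ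

/-- deterministic CFMs -/
def Deterministic (C : CFM P A) : Prop :=
  ∀ p s γ₁ s₁ γ₂ s₂, (s, γ₁, s₁) ∈ C.Δ p → (s, γ₂, s₂) ∈ C.Δ p →
    CAct.labelOf γ₁ = CAct.labelOf γ₂ →
    ((∀ a₁ a₂, γ₁ = CAct.internal a₁ → γ₂ = CAct.internal a₂ → s₁ = s₂) ∧
     (∀ a₁ m₁ a₂ m₂ q, γ₁ = CAct.send a₁ m₁ q → γ₂ = CAct.send a₂ m₂ q →
        s₁ = s₂ ∧ m₁ = m₂) ∧
     (∀ a₁ a₂ m q, γ₁ = CAct.recv a₁ m q → γ₂ = CAct.recv a₂ m q → s₁ = s₂))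

end CFM

/-- acceptance of the extended MSC `(M, ξ)` by a CFM over a product alphabet -/
def AcceptsExt {P A E Ξ : Type} (C : CFM P (A × Ξ)) (M : MSC P A E) (ξ : E → Ξ) : Prop :=
  C.Accepts (M.relabel fun e => (M.lab e, ξ e))

/-- apply `μ` to an extended event, sending both `⊥` and `⊤` to `none` -/
def extToOptMap {E Θ : Type} (μ : E → Θ) : ExtEv E → Option Θ
  | .evt g => some (μ g)
  | _ => none

/-- apply `μ` to an extended event, preserving `⊥` and `⊤` -/
def extMap {E Θ : Type} (μ : E → Θ) : ExtEv E → ExtEv Θ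
  | .bot => ExtEv.bot
  | .evt g => ExtEv.evt (μ g)
  | .top => ExtEv.top

/-- formulas of the temporal logic TL -/
inductive TL (P A : Type) : Type where
  | lab (a : A) : TL P A
  | proc (p : P) : TL P A
  | disj (φ ψ : TL P A) : TL P A
  | neg (φ : TL P A) : TL P A
  | co (φ : TL P A) : TL P A
  | tuntil (φ ψ : TL P A) : TL P A
  | tsince (φ ψ : TL P A) : TL P A

/-- `M, e ⊨ φ` -/
def TLsat (M : MSC P A E) : TL P A → E → Prop
  | .lab a, e => M.lab e = a
  | .proc p, e => M.loc e = p
  | .disj φ ψ, e => TLsat M φ e ∨ TLsat M ψ e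
  | .neg φ, e => ¬ TLsat M φ e
  | .co φ, e => ∃ f, ¬ M.le e f ∧ ¬ M.le f e ∧ TLsat M φ f
  | .tuntil φ ψ, e => ∃ f, M.lt e f ∧ TLsat M ψ f ∧ ∀ g, M.lt e g → M.lt g f → TLsat M φ g
  | .tsince φ ψ, e => ∃ f, M.lt f e ∧ TLsat M ψ f ∧ ∀ g, M.lt f g → M.lt g e → TLsat M φ g

theorem MSC.nextStar_le' (M : MSC P A E) {e f : E} (h : M.nextStar e f) : M.le e f :=
  by
    unfold MSC.nextStar at h
    induction h with
    | refl => exact Relation.ReflTransGen.refl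
    | tail _ hs ih => exact ih.tail (Or.inl hs)

theorem MSC.nextStar_loc' (M : MSC P A E) {e f : E} (h : M.nextStar e f) :
    M.loc e = M.loc f := by
  induction h with
  | refl => rfl
  | tail _ hstep ih => exact ih.trans (M.next_loc hstep)

theorem MSC.le_loc_nextStar' (M : MSC P A E) {e f : E} (h : M.le e f)
    (hl : M.loc e = M.loc f) : M.nextStar e f := by
  rcases M.next_total e f hl with h1 | h1
  · exact h1
  · have he : e = f := M.causal_antisymm h (M.nextStar_le' h1)
    exact he ▸ Relation.ReflTransGen.refl

theorem locsrc (M : MSC P A E) (π : PathExpr P A) :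
    ∀ (p q : P) (e f : E), pathSem M π e f → pcomp π p q → M.loc f = q → M.loc e = p := by
  induction π with
  | nil =>
    intro p q e f hp hc hf
    cases hp; cases hc; exact hf
  | cons l π ih =>
    intro p q e f hp hc hf
    obtain ⟨m, hl, hπ⟩ := hp
    obtain ⟨y, hly, hcy⟩ := hc
    have hm := ih y q m f hπ hcy hf
    cases l with
    | next => cases hly; exact (M.next_loc hl).trans hm
    | nextStar => cases hly; exact (M.nextStar_loc' hl).trans hm
    | lab a =>
      cases hly
      obtain ⟨he, _⟩ := hl
      exact he ▸ hm
    | msg p0 q0 =>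
      obtain ⟨hp0, hq0⟩ := hly
      obtain ⟨he, _, _⟩ := hl
      subst hp0; exact he
  
theorem loctgt (M : MSC P A E) (π : PathExpr P A) :
    ∀ (p q : P) (e f : E), pathSem M π e f → pcomp π p q → M.loc e = p → M.loc f = q := by
  induction π with
  | nil =>
    intro p q e f hp hc he
    cases hp; cases hc; exact he
  | cons l π ih =>
    intro p q e f hp hc he
    obtain ⟨m, hl, hπ⟩ := hp
    obtain ⟨y, hly, hcy⟩ := hc
    cases l with
    | next =>
      cases hly
      exact ih p q m f hπ hcy ((M.next_loc hl).symm.trans he)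
    | nextStar =>
      cases hly
      exact ih p q m f hπ hcy ((M.nextStar_loc' hl).symm.trans he)
    | lab a =>
      cases hly
      obtain ⟨heq, _⟩ := hl
      exact ih p q m f hπ hcy (heq ▸ he)
    | msg p0 q0 =>
      obtain ⟨hp0, hq0⟩ := hly
      obtain ⟨_, hm, _⟩ := hl
      refine ih y q m f hπ hcy ?_
      rw [hq0]; exact hm

theorem pathSem_append (M : MSC P A E) (σ τ : PathExpr P A) :
    ∀ e g, pathSem M (σ ++ τ) e g ↔ ∃ m, pathSem M σ e m ∧ pathSem M τ m g := by
  induction σ with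
  | nil => intro e g; simp [pathSem]
  | cons l σ ih =>
    intro e g
    constructor
    · rintro ⟨m, hl, hp⟩
      obtain ⟨m', h1, h2⟩ := (ih m g).1 hp
      exact ⟨m', ⟨m, hl, h1⟩, h2⟩
    · rintro ⟨m', ⟨m, hl, h1⟩, h2⟩
      exact ⟨m, hl, (ih m g).2 ⟨m', h1, h2⟩⟩

/-- Key monotonicity lemma: if `e` is a `π`-source of `h`, `h →* f`, and `f` has
some `π`-source, then `f` has a `π`-source above `e`. -/
theorem pathSem_mono (M : MSC P A E) (π : PathExpr P A) :
    ∀ e h f, pathSem M π e h → M.nextStar h f → (∃ d, pathSem M π d f) →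
      ∃ e', pathSem M π e' f ∧ M.le e e' := by
  induction π using List.reverseRecOn with
  | nil =>
    intro e h f hp hs _
    cases hp
    exact ⟨f, rfl, M.nextStar_le' hs⟩
  | append_singleton σ l ih =>
    intro e h f hp hs hd
    obtain ⟨m, hσ, hl⟩ := (pathSem_append M σ [l] e h).1 hp
    obtain ⟨m1, hl1, heq1⟩ := hl
    cases heq1
    obtain ⟨d, hdp⟩ := hd
    obtain ⟨md, hdσ, hdl⟩ := (pathSem_append M σ [l] d f).1 hdp
    obtain ⟨md1, hdl1, heq2⟩ := hdl
    cases heq2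
    cases l with
    | next =>
      have hmmd : M.nextStar m md := by
        rcases Relation.ReflTransGen.cases_tail hs with heq | ⟨c, hc1, hc2⟩
        · cases heq
          have : m = md := M.next_left_unique hl1 hdl1
          exact this ▸ Relation.ReflTransGen.refl
        · have hc : c = md := M.next_left_unique hc2 hdl1
          exact hc ▸ Relation.ReflTransGen.head hl1 hc1
      obtain ⟨e', he', hle⟩ := ih e m md hσ hmmd ⟨d, hdσ⟩
      exact ⟨e', (pathSem_append M σ [_] e' f).2 ⟨md, he', ⟨f, hdl1, rfl⟩⟩, hle⟩
    | nextStar =>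
      refine ⟨e, (pathSem_append M σ [_] e f).2 ⟨m, hσ, ⟨f, ?_, rfl⟩⟩,
        Relation.ReflTransGen.refl⟩
      exact Relation.ReflTransGen.trans hl1 hs
    | lab a =>
      obtain ⟨hme, _⟩ := hl1
      obtain ⟨hde, hdlab⟩ := hdl1
      obtain ⟨e', he', hle⟩ := ih e h f (hme ▸ hσ) hs ⟨d, hde ▸ hdσ⟩
      exact ⟨e', (pathSem_append M σ [_] e' f).2
        ⟨f, he', ⟨f, ⟨rfl, hde ▸ hdlab⟩, rfl⟩⟩, hle⟩
    | msg p0 q0 =>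
      obtain ⟨hlm, hlh, hmsg⟩ := hl1
      obtain ⟨hlmd, hlf, hmsgd⟩ := hdl1
      have hmmd : M.nextStar m md :=
        (M.fifo hmsg hmsgd (hlm.trans hlmd.symm) (hlh.trans hlf.symm)).2 hs
      obtain ⟨e', he', hle⟩ := ih e m md hσ hmmd ⟨d, hdσ⟩
      exact ⟨e', (pathSem_append M σ [_] e' f).2
        ⟨md, he', ⟨f, ⟨hlmd, hlf, hmsgd⟩, rfl⟩⟩, hle⟩

end Gossip
open Gossip in
/-- if `last_π(f) ≠ ⊥` and `last_{π'}(f) ≠ ⊥`, then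
`π ≼_f π'` iff `f_{π, →*π'}(f) ≤ f`. -/
theorem stmt5 {P A E : Type} [Fintype P] [Fintype A] (M : MSC P A E)
    (p q : P) (π π' : PathExpr P A)
    (hπ : pcomp π p q) (hπ' : pcomp π' p q)
    (f : E) (hf : M.loc f = q)
    (x x' z : ExtEv E)
    (hx : IsLast M π f x) (hx' : IsLast M π' f x')
    (hxb : x ≠ ExtEv.bot) (hx'b : x' ≠ ExtEv.bot)
    (hz : IsFa M π (PathLetter.nextStar :: π') f z) :
    M.extLe x x' ↔ M.extLe z (ExtEv.evt f) := by
  cases x with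
  | bot => exact absurd rfl hxb
  | top => exact hx.elim
  | evt g =>
  cases x' with
  | bot => exact absurd rfl hx'b
  | top => exact hx'.elim
  | evt g' =>
  obtain ⟨hgpath, hgmax⟩ := hx
  obtain ⟨hg'path, hg'max⟩ := hx'
  rcases hz with ⟨hbot, rfl⟩ | ⟨g0, hg0last, hfirst⟩
  · exact absurd hgpath (hbot g)
  obtain ⟨hg0path, hg0max⟩ := hg0last
  have hgg0 : g = g0 := M.causal_antisymm (hg0max g hgpath) (hgmax g0 hg0path)
  subst hgg0
  have hlocg : M.loc g = p := locsrc M π p q g f hgpath hπ hf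
  have hlocg' : M.loc g' = p := locsrc M π' p q g' f hg'path hπ' hf
  constructor
  · intro hle
    have hstar : M.nextStar g g' := M.le_loc_nextStar' hle (hlocg.trans hlocg'.symm)
    have hpath : pathSem M (PathLetter.nextStar :: π') g f := ⟨g', hstar, hg'path⟩
    cases z with
    | bot => exact hfirst.elim
    | top => exact absurd hpath (hfirst f)
    | evt hh => exact hfirst.2 f hpath
  · intro hzf
    cases z with
    | bot => exact hfirst.elim
    | top => exact hzf.elim
    | evt hh =>
      obtain ⟨hhp, _⟩ := hfirst
      obtain ⟨g1, hstar1, hπ'1⟩ := hhp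
      have hlocg1 : M.loc g1 = p := (M.nextStar_loc' hstar1).symm.trans hlocg
      have hloch : M.loc hh = q := loctgt M π' p q g1 hh hπ'1 hπ' hlocg1
      have hhf : M.nextStar hh f := M.le_loc_nextStar' hzf (hloch.trans hf.symm)
      obtain ⟨e', he', hle1⟩ := pathSem_mono M π' g1 hh f hπ'1 hhf ⟨g', hg'path⟩
      exact ((M.nextStar_le' hstar1).trans hle1).trans (hg'max e' he')
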